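/- The fundamental group of a closed orientable surface of genus $g \geq 2$ has trivial center. -/

import Mathlib

open Monoid PushoutI CoprodI Subgroup

open scoped commutatorElement in
/-- The relator `[a₁,b₁]⋯[a_g,b_g]` of the genus-`g` surface group, in the free
group on generators `aᵢ` (`Sum.inl i`) and `bᵢ` (`Sum.inr i`). -/
def surfaceRelator (g : ℕ) : FreeGroup (Fin g ⊕ Fin g) :=
  (List.ofFn fun i : Fin g =>
    ⁅FreeGroup.of (Sum.inl i : Fin g ⊕ Fin g), FreeGroup.of (Sum.inr i : Fin g ⊕ Fin g)⁆).prod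

namespace SurfaceAux

open scoped commutatorElement


variable {ι : Type*} {G : ι → Type*} [∀ i, Group (G i)] {H : Type*} [Group H]
  {φ : ∀ i, H →* G i}

theorem word_prod_eq (w : Word G) :
    w.prod = (w.toList.map fun p => CoprodI.of p.2).prod := rfl

theorem word_fstIdx_eq (w : Word G) :
    w.fstIdx = w.toList.head?.map Sigma.fst := rfl

/-- Reversal of a word. -/
def wrev (w : Word G) : Word G where
  toList := (w.toList.map fun p => (⟨p.1, p.2⁻¹⟩ : Σ i, G i)).reverse
  ne_one := by
    intro l hl
    rw [List.mem_reverse, List.mem_map] at hl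
    obtain ⟨p, hp, rfl⟩ := hl
    simpa using w.ne_one p hp
  chain_ne := by
    rw [List.isChain_reverse]
    refine (List.isChain_map _).2 ?_
    exact w.chain_ne.imp fun {a b} h => Ne.symm h

theorem wrev_toList (w : Word G) :
    (wrev w).toList = (w.toList.map fun p => (⟨p.1, p.2⁻¹⟩ : Σ i, G i)).reverse := rfl

theorem wrev_map_fst (w : Word G) :
    (wrev w).toList.map Sigma.fst = (w.toList.map Sigma.fst).reverse := by
  simp [wrev_toList, List.map_reverse, List.map_map, Function.comp_def]

theorem wrev_length (w : Word G) :
    (wrev w).toList.length = w.toList.length := by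
  simp [wrev_toList]

theorem wrev_prod (w : Word G) : (wrev w).prod = w.prod⁻¹ := by
  rw [word_prod_eq, word_prod_eq, wrev_toList, List.prod_inv_reverse,
    List.map_reverse, List.map_map, List.map_map]
  simp [Function.comp_def]

theorem wrev_reduced {w : Word G} (hw : Reduced φ w) : Reduced φ (wrev w) := by
  intro p hp
  rw [wrev_toList, List.mem_reverse, List.mem_map] at hp
  obtain ⟨q, hq, rfl⟩ := hp
  simpa using hw q hq

/-- The tail of a word. -/
def wtail (w : Word G) : Word G where
  toList := w.toList.tail
  ne_one := fun l hl => w.ne_one l (List.mem_of_mem_tail hl)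
  chain_ne := w.chain_ne.tail

theorem wtail_reduced {w : Word G} (hw : Reduced φ w) : Reduced φ (wtail w) :=
  fun l hl => hw l (List.mem_of_mem_tail hl)

theorem map_fst_eq_of_prod_eq (hφ : ∀ i, Function.Injective (φ i)) {u v : Word G}
    (hu : Reduced φ u) (hv : Reduced φ v)
    (h : ofCoprodI u.prod = (ofCoprodI v.prod : PushoutI φ)) :
    u.toList.map Sigma.fst = v.toList.map Sigma.fst := by
  obtain ⟨d⟩ := NormalWord.transversal_nonempty φ hφ
  obtain ⟨u', hu1, hu2⟩ := hu.exists_normalWord_prod_eq d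
  obtain ⟨v', hv1, hv2⟩ := hv.exists_normalWord_prod_eq d
  rw [← hu2, ← hv2]
  have : u' = v' := NormalWord.prod_injective (by rw [hu1, hv1, h])
  rw [this]

theorem not_mem_range_of_mem_set (d : NormalWord.Transversal φ) {i : ι} {g : G i}
    (hg : g ∈ d.set i) (h1 : g ≠ 1) : g ∉ (φ i).range := by
  rintro ⟨h, rfl⟩
  have hinj := (d.compl i).1
  have := hinj (a₁ := (⟨⟨φ i h, ⟨h, rfl⟩⟩, ⟨1, d.one_mem i⟩⟩ : (φ i).range × d.set i))
    (a₂ := (⟨⟨1, one_mem _⟩, ⟨φ i h, hg⟩⟩ : (φ i).range × d.set i)) (by simp)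
  apply h1
  have := congrArg (fun x => (x.2 : G i)) this
  simpa using this.symm

theorem absorb_base (h : H) {w : Word G} (hw : Reduced φ w) (hne : w.toList ≠ []) :
    ∃ w' : Word G, Reduced φ w' ∧ w'.toList.map Sigma.fst = w.toList.map Sigma.fst ∧
      ofCoprodI w'.prod = (base φ h : PushoutI φ) * ofCoprodI w.prod := by
  obtain ⟨x, xs, heq⟩ := List.exists_cons_of_ne_nil hne
  have hchain := heq ▸ w.chain_ne
  have hxmem : x ∈ w.toList := heq ▸ (List.mem_cons_self : x ∈ x :: xs)
  have hxr : x.2 ∉ (φ x.1).range := hw x hxmem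
  refine ⟨⟨⟨x.1, φ x.1 h * x.2⟩ :: xs, ?_, ?_⟩, ?_, ?_, ?_⟩
  · rintro l hl
    rcases List.mem_cons.1 hl with rfl | hl
    · intro h1
      apply hxr
      simp only at h1
      rw [eq_inv_of_mul_eq_one_right h1]
      exact inv_mem (MonoidHom.mem_range.2 ⟨h, rfl⟩)
    · exact w.ne_one l (heq ▸ List.mem_cons_of_mem x hl)
  · refine List.isChain_cons.2 ⟨?_, (List.isChain_cons.1 hchain).2⟩
    exact fun y hy => (List.isChain_cons.1 hchain).1 y hy
  · rintro l hl
    rcases List.mem_cons.1 hl with rfl | hl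
    · simpa using fun hmem => hxr ((Subgroup.mul_mem_cancel_left _ (MonoidHom.mem_range.2 ⟨h, rfl⟩)).1 hmem)
    · exact hw l (heq ▸ List.mem_cons_of_mem x hl)
  · simp [heq]
  · have hRHS : w.prod = CoprodI.of x.2 * (List.map (fun p => CoprodI.of p.2) xs).prod := by
      rw [word_prod_eq, heq]; simp
    rw [hRHS, word_prod_eq]
    simp only [List.map_cons, List.prod_cons, map_mul, ofCoprodI_of]
    rw [of_apply_eq_base φ x.1 h, mul_assoc]

theorem exists_reduced (hφ : ∀ i, Function.Injective (φ i)) (z : PushoutI φ) :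
    (∃ h, z = base φ h) ∨
      ∃ w : Word G, Reduced φ w ∧ w.toList ≠ [] ∧ ofCoprodI w.prod = z := by
  classical
  obtain ⟨d⟩ := NormalWord.transversal_nonempty φ hφ
  set nw : NormalWord d := z • NormalWord.empty with hnw
  have hprod : nw.prod = z := by
    rw [hnw, NormalWord.prod_smul, NormalWord.prod_empty, mul_one]
  have hred : Reduced φ nw.toWord := by
    intro l hl
    exact not_mem_range_of_mem_set d (nw.normalized l.1 l.2 hl) (nw.ne_one l hl)
  by_cases hnil : nw.toWord.toList = []
  · left
    refine ⟨nw.head, ?_⟩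
    rw [← hprod]
    rw [NormalWord.prod, word_prod_eq, hnil]
    simp
  · right
    obtain ⟨w', hw'red, hw'map, hw'prod⟩ := absorb_base (φ := φ) nw.head hred hnil
    refine ⟨w', hw'red, ?_, ?_⟩
    · intro hw'nil
      apply hnil
      have := hw'map
      rw [hw'nil] at this
      simpa using (List.map_eq_nil_iff.1 this.symm)
    · rw [hw'prod, ← hprod, NormalWord.prod]

theorem mem_base_range_of_center (hφ : ∀ i, Function.Injective (φ i))
    (t : ∀ i, G i) (ht : ∀ i, t i ∉ (φ i).range) [Nontrivial ι]
    {z : PushoutI φ} (hz : ∀ g : PushoutI φ, g * z = z * g) :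
    ∃ h, z = base φ h := by
  rcases exists_reduced hφ z with h | ⟨w, hred, hne, hwz⟩
  · exact h
  exfalso
  obtain ⟨x, xs, heq⟩ := List.exists_cons_of_ne_nil hne
  have hWne : (wrev w).toList ≠ [] := by simp [wrev_toList, heq]
  obtain ⟨y0, ys, heqW⟩ := List.exists_cons_of_ne_nil hWne
  obtain ⟨j, hj⟩ := exists_ne x.1
  obtain ⟨b, hb⟩ : ∃ b : G j, b ∉ (φ j).range := ⟨t j, ht j⟩
  have hb1 : b ≠ 1 := fun e => hb (e ▸ one_mem _)
  have hfst : w.fstIdx ≠ some j := by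
    rw [word_fstIdx_eq, heq]
    simpa using fun e => hj e.symm
  have hult : (Word.cons b w hfst hb1).toList = ⟨j, b⟩ :: w.toList := rfl
  have hured : Reduced φ (Word.cons b w hfst hb1) := by
    intro l hl
    rw [hult] at hl
    rcases List.mem_cons.1 hl with rfl | hl
    · exact hb
    · exact hred l hl
  have huprod : ofCoprodI (Word.cons b w hfst hb1).prod = PushoutI.of j b * z := by
    rw [word_prod_eq, hult]
    simp only [List.map_cons, List.prod_cons, map_mul, ofCoprodI_of]
    rw [← word_prod_eq, hwz]
  have hrured : Reduced φ (wrev (Word.cons b w hfst hb1)) := wrev_reduced hured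
  have hruprod : ofCoprodI (wrev (Word.cons b w hfst hb1)).prod = (PushoutI.of j b * z)⁻¹ := by
    rw [wrev_prod, map_inv, huprod]
  have hrulen : (wrev (Word.cons b w hfst hb1)).toList.length = w.toList.length + 1 := by
    rw [wrev_length, hult]; simp
  have hwlen : w.toList.length = ys.length + 1 := by
    have := wrev_length w
    rw [heqW] at this
    simpa using this.symm
  by_cases hcase : y0.1 = j
  · subst hcase
    -- last letter of w lies in factor j = y0.1
    have hTlist : (wtail (wrev w)).toList = ys := by
      show (wrev w).toList.tail = ys
      rw [heqW]
      rfl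
    have hz' : ofCoprodI (wrev w).prod = z⁻¹ := by rw [wrev_prod, map_inv, hwz]
    have hsplit : (ofCoprodI (wrev w).prod : PushoutI φ)
        = PushoutI.of y0.1 y0.2 * ofCoprodI (wtail (wrev w)).prod := by
      have h1 : (wrev w).prod = CoprodI.of y0.2 * (wtail (wrev w)).prod := by
        rw [word_prod_eq (wrev w), word_prod_eq (wtail (wrev w)), heqW, hTlist]
        simp
      rw [h1, map_mul, ofCoprodI_of]
    have hE2 : PushoutI.of y0.1 (b⁻¹ * y0.2) * ofCoprodI (wtail (wrev w)).prod
        = (PushoutI.of y0.1 b * z)⁻¹ := by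
      rw [map_mul, mul_assoc, ← hsplit, hz', map_inv, ← mul_inv_rev, hz (PushoutI.of y0.1 b)]
    by_cases hcr : b⁻¹ * y0.2 ∈ (φ y0.1).range
    · obtain ⟨h', hh'⟩ := hcr
      by_cases hys : ys = []
      · have hT1 : (ofCoprodI (wtail (wrev w)).prod : PushoutI φ) = 1 := by
          have hnil : (wtail (wrev w)).toList = [] := by rw [hTlist, hys]
          rw [word_prod_eq, hnil]
          simp
        have hmem : ofCoprodI (wrev (Word.cons b w hfst hb1)).prod ∈ (base φ).range := by
          rw [hruprod, ← hE2, hT1, mul_one, ← hh', of_apply_eq_base]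
          exact ⟨h', rfl⟩
        have := Reduced.eq_empty_of_mem_range hφ hrured hmem
        have hl0 := congrArg (fun w : Word G => w.toList.length) this
        simp only [Word.empty] at hl0
        rw [hrulen] at hl0
        simp at hl0
      · have hTne : (wtail (wrev w)).toList ≠ [] := by rw [hTlist]; exact hys
        obtain ⟨w2, hw2red, hw2map, hw2prod⟩ :=
          absorb_base h' (wtail_reduced (wrev_reduced hred)) hTne
        have hw2p : ofCoprodI w2.prod = (PushoutI.of y0.1 b * z)⁻¹ := by
          rw [hw2prod, ← of_apply_eq_base φ y0.1 h', hh', hE2]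
        have key := map_fst_eq_of_prod_eq hφ hrured hw2red (by rw [hruprod, hw2p])
        have hlen := congrArg List.length key
        simp only [List.length_map] at hlen
        have hlen2 := congrArg List.length hw2map
        simp only [List.length_map, hTlist] at hlen2
        rw [hrulen] at hlen
        omega
    · have hc1 : b⁻¹ * y0.2 ≠ 1 := fun e => hcr (e ▸ one_mem _)
      have hTfst : (wtail (wrev w)).fstIdx ≠ some y0.1 := by
        have hch := (wrev w).chain_ne
        rw [heqW] at hch
        have h1 := (List.isChain_cons.1 hch).1
        rw [word_fstIdx_eq, hTlist]
        intro hcon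
        rcases hmap : ys.head? with _ | y1
        · rw [hmap] at hcon; simp at hcon
        · rw [hmap] at hcon
          exact h1 y1 hmap (show y0.1 = y1.1 by simpa using hcon.symm)
      have hvlt : (Word.cons (b⁻¹ * y0.2) (wtail (wrev w)) hTfst hc1).toList
          = ⟨y0.1, b⁻¹ * y0.2⟩ :: (wtail (wrev w)).toList := rfl
      have hvred : Reduced φ (Word.cons (b⁻¹ * y0.2) (wtail (wrev w)) hTfst hc1) := by
        intro l hl
        rw [hvlt] at hl
        rcases List.mem_cons.1 hl with rfl | hl
        · exact hcr
        · exact wtail_reduced (wrev_reduced hred) l hl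
      have hvprod : ofCoprodI (Word.cons (b⁻¹ * y0.2) (wtail (wrev w)) hTfst hc1).prod
          = (PushoutI.of y0.1 b * z)⁻¹ := by
        rw [word_prod_eq, hvlt, List.map_cons, List.prod_cons, map_mul, ofCoprodI_of,
          ← word_prod_eq]
        exact hE2
      have key := map_fst_eq_of_prod_eq hφ hrured hvred (by rw [hruprod, hvprod])
      have hlen := congrArg List.length key
      simp only [List.length_map] at hlen
      rw [hrulen, hvlt] at hlen
      simp only [List.length_cons, hTlist] at hlen
      omega
  · -- last letter of w is not in factor j
    have hWfst : (wrev w).fstIdx ≠ some j := by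
      rw [word_fstIdx_eq, heqW]
      simpa using fun e => hcase e
    have hbinv : b⁻¹ ≠ 1 := by simpa using hb1
    have hv0lt : (Word.cons b⁻¹ (wrev w) hWfst hbinv).toList = ⟨j, b⁻¹⟩ :: (wrev w).toList := rfl
    have hv0red : Reduced φ (Word.cons b⁻¹ (wrev w) hWfst hbinv) := by
      intro l hl
      rw [hv0lt] at hl
      rcases List.mem_cons.1 hl with rfl | hl
      · simpa using hb
      · exact wrev_reduced hred l hl
    have hv0prod : ofCoprodI (Word.cons b⁻¹ (wrev w) hWfst hbinv).prod
        = PushoutI.of j b⁻¹ * z⁻¹ := by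
      rw [word_prod_eq, hv0lt]
      simp only [List.map_cons, List.prod_cons, map_mul, ofCoprodI_of]
      rw [← word_prod_eq, wrev_prod]
      have hzz : ofCoprodI w.prod⁻¹ = z⁻¹ := by rw [map_inv, hwz]
      rw [hzz]
    have hvred : Reduced φ (wrev (Word.cons b⁻¹ (wrev w) hWfst hbinv)) :=
      wrev_reduced hv0red
    have hvprod : ofCoprodI (wrev (Word.cons b⁻¹ (wrev w) hWfst hbinv)).prod
        = PushoutI.of j b * z := by
      rw [wrev_prod, map_inv, hv0prod]
      rw [mul_inv_rev, inv_inv, map_inv, inv_inv, hz (PushoutI.of j b)]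
    have key := map_fst_eq_of_prod_eq hφ hured hvred (by rw [huprod, hvprod])
    have humap : (Word.cons b w hfst hb1).toList.map Sigma.fst
        = j :: w.toList.map Sigma.fst := by rw [hult]; rfl
    have hvmap : (wrev (Word.cons b⁻¹ (wrev w) hWfst hbinv)).toList.map Sigma.fst
        = w.toList.map Sigma.fst ++ [j] := by
      rw [wrev_map_fst]
      have : (Word.cons b⁻¹ (wrev w) hWfst hbinv).toList.map Sigma.fst
          = j :: (wrev w).toList.map Sigma.fst := by rw [hv0lt]; rfl
      rw [this, wrev_map_fst, List.reverse_cons, List.reverse_reverse]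
    rw [humap, hvmap] at key
    have hhd := congrArg List.head? key
    rw [heq] at hhd
    simp at hhd
    exact hj hhd



theorem hom_surfaceRelator {m : ℕ} {K : Type*} [Group K] (f : FreeGroup (Fin m ⊕ Fin m) →* K) :
    f (surfaceRelator m) =
      (List.ofFn fun i : Fin m =>
        ⁅f (FreeGroup.of (Sum.inl i)), f (FreeGroup.of (Sum.inr i))⁆).prod := by
  rw [surfaceRelator, map_list_prod, List.map_ofFn]
  have : (⇑f ∘ fun i : Fin m =>
      ⁅FreeGroup.of (Sum.inl i : Fin m ⊕ Fin m), FreeGroup.of (Sum.inr i)⁆)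
      = fun i : Fin m => ⁅f (FreeGroup.of (Sum.inl i)), f (FreeGroup.of (Sum.inr i))⁆ := by
    funext i
    simp [Function.comp_def, map_commutatorElement]
  rw [this]

theorem surfaceRelator_one :
    surfaceRelator 1 = ⁅(FreeGroup.of (Sum.inl (0 : Fin 1)) : FreeGroup (Fin 1 ⊕ Fin 1)),
      FreeGroup.of (Sum.inr (0 : Fin 1))⁆ := by
  rw [surfaceRelator, List.ofFn_succ]
  simp

/-! Dihedral group facts -/

def rz (t : ℤ) : DihedralGroup 0 := DihedralGroup.r t
def srz (t : ℤ) : DihedralGroup 0 := DihedralGroup.sr t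
theorem rz_mul_rz (a b : ℤ) : rz a * rz b = rz (a + b) := DihedralGroup.r_mul_r (n := 0) a b
theorem srz_mul_rz (a b : ℤ) : srz a * rz b = srz (a + b) := DihedralGroup.sr_mul_r (n := 0) a b
theorem rz_mul_srz (a b : ℤ) : rz a * srz b = srz (b - a) := DihedralGroup.r_mul_sr (n := 0) a b
theorem srz_mul_srz (a b : ℤ) : srz a * srz b = rz (b - a) := DihedralGroup.sr_mul_sr (n := 0) a b
theorem rz_inj {a b : ℤ} (h : rz a = rz b) : a = b := DihedralGroup.r.inj h
theorem srz_inj {a b : ℤ} (h : srz a = srz b) : a = b := DihedralGroup.sr.inj h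
theorem rz_zero : rz 0 = 1 := DihedralGroup.one_def.symm

theorem rz_inv (a : ℤ) : (rz a)⁻¹ = rz (-a) :=
  inv_eq_of_mul_eq_one_right (by rw [rz_mul_rz, add_neg_cancel, rz_zero])

theorem srz_inv (a : ℤ) : (srz a)⁻¹ = srz a :=
  inv_eq_of_mul_eq_one_right (by rw [srz_mul_srz, sub_self, rz_zero])

/-- The rotation homomorphism into the infinite dihedral group. -/
def rzHom : Multiplicative ℤ →* DihedralGroup 0 where
  toFun x := rz (Multiplicative.toAdd x)
  map_one' := rz_zero
  map_mul' _ _ := (rz_mul_rz _ _).symm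

theorem rzHom_injective : Function.Injective rzHom := fun _ _ h =>
  Multiplicative.toAdd.injective (rz_inj h)

theorem rz_zpow (a kz : ℤ) : (rz a) ^ kz = rz (kz * a) := by
  have h1 : rz a = rzHom (Multiplicative.ofAdd a) := rfl
  rw [h1, ← map_zpow, ← ofAdd_zsmul, smul_eq_mul]
  rfl

theorem comm_srz_rz : ⁅srz 0, rz 1⁆ = rz (-2) := by
  rw [commutatorElement_def, srz_inv, rz_inv, srz_mul_rz, srz_mul_srz, rz_mul_rz]
  norm_num

theorem detect_pow {e kz : ℤ} (he : e ≠ 0) (h : (rz e) ^ kz = 1) : kz = 0 := by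
  rw [rz_zpow, ← rz_zero] at h
  have h2 := rz_inj h
  rcases mul_eq_zero.1 h2 with h3 | h3
  · exact h3
  · exact absurd h3 he

theorem detect_comm {kz : ℤ} (h : srz 0 * (rz (-2)) ^ kz = (rz (-2)) ^ kz * srz 0) :
    kz = 0 := by
  rw [rz_zpow, srz_mul_rz, rz_mul_srz] at h
  have h2 := srz_inj h
  omega

/-! Detection homomorphisms -/

def psi (m : ℕ) : FreeGroup (Fin m ⊕ Fin m) →* DihedralGroup 0 :=
  FreeGroup.lift (Sum.elim (fun i => if (i : ℕ) = 0 then srz 0 else 1)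
    (fun i => if (i : ℕ) = 0 then rz 1 else 1))

theorem psi_of_inl0 {m : ℕ} : psi (m + 1) (FreeGroup.of (Sum.inl (0 : Fin (m+1)))) = srz 0 := by
  rw [psi, FreeGroup.lift_apply_of]
  simp

theorem psi_rel (m : ℕ) : psi (m + 1) (surfaceRelator (m + 1)) = rz (-2) := by
  rw [hom_surfaceRelator, List.ofFn_succ, List.prod_cons]
  have htail : (List.ofFn fun i : Fin m =>
      ⁅psi (m + 1) (FreeGroup.of (Sum.inl i.succ)),
        psi (m + 1) (FreeGroup.of (Sum.inr i.succ))⁆).prod = 1 := by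
    apply List.prod_eq_one
    intro x hx
    rw [List.mem_ofFn] at hx
    obtain ⟨i, rfl⟩ := hx
    simp [psi, FreeGroup.lift_apply_of, Fin.val_succ]
  rw [htail, mul_one]
  have h1 : psi (m + 1) (FreeGroup.of (Sum.inl (0 : Fin (m+1)))) = srz 0 := psi_of_inl0
  have h2 : psi (m + 1) (FreeGroup.of (Sum.inr (0 : Fin (m+1)))) = rz 1 := by
    rw [psi, FreeGroup.lift_apply_of]; simp
  rw [h1, h2, comm_srz_rz]

def chi (m : ℕ) : FreeGroup (Fin m ⊕ Fin m) →* Multiplicative ℤ :=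
  FreeGroup.lift (Sum.elim (fun _ => Multiplicative.ofAdd 1) fun _ => 1)

theorem chi_rel (m : ℕ) : chi m (surfaceRelator m) = 1 := by
  rw [hom_surfaceRelator]
  apply List.prod_eq_one
  intro x hx
  rw [List.mem_ofFn] at hx
  obtain ⟨i, rfl⟩ := hx
  exact commutatorElement_eq_one_iff_mul_comm.2 (mul_comm _ _)

theorem chi_of_inl {m : ℕ} (i : Fin m) :
    chi m (FreeGroup.of (Sum.inl i)) = Multiplicative.ofAdd 1 := by
  rw [chi, FreeGroup.lift_apply_of]; rfl

theorem unit_zpow (u : FreeGroup Unit) : ∃ kz : ℤ, u = FreeGroup.of () ^ kz :=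
  ⟨FreeGroup.freeGroupUnitEquivInt u, (FreeGroup.freeGroupUnitEquivInt.left_inv u).symm⟩

/-! The amalgam setup -/

abbrev dim (n : ℕ) : Bool → ℕ := fun b => cond b 1 n

abbrev GF (n : ℕ) (b : Bool) := FreeGroup (Fin (dim n b) ⊕ Fin (dim n b))

def φS (n : ℕ) : ∀ b, FreeGroup Unit →* GF n b
  | true => FreeGroup.lift fun _ => surfaceRelator 1
  | false => FreeGroup.lift fun _ => (surfaceRelator n)⁻¹

theorem φS_true_of (n : ℕ) : φS n true (FreeGroup.of ()) = surfaceRelator 1 :=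
  FreeGroup.lift_apply_of

theorem φS_false_of (n : ℕ) : φS n false (FreeGroup.of ()) = (surfaceRelator n)⁻¹ :=
  FreeGroup.lift_apply_of

theorem φS_injective (k : ℕ) : ∀ b, Function.Injective (φS (k + 1) b) := by
  intro b
  rw [injective_iff_map_eq_one]
  intro u hu
  obtain ⟨kz, rfl⟩ := unit_zpow u
  rw [map_zpow] at hu
  cases b with
  | true =>
      rw [φS_true_of] at hu
      have := congrArg (psi 1) hu
      rw [map_zpow, map_one, (psi_rel 0 : psi 1 (surfaceRelator 1) = rz (-2))] at this
      rw [detect_pow (by norm_num : (-2 : ℤ) ≠ 0) this, zpow_zero]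
  | false =>
      rw [φS_false_of] at hu
      have := congrArg (psi (k + 1)) hu
      rw [map_zpow, map_one, map_inv, psi_rel k, rz_inv] at this
      rw [detect_pow (by norm_num : (2 : ℤ) ≠ 0) this, zpow_zero]

def tS (n : ℕ) (hn : 1 ≤ n) : ∀ b, GF n b
  | true => FreeGroup.of (Sum.inl (0 : Fin 1))
  | false => FreeGroup.of (Sum.inl (⟨0, hn⟩ : Fin n))

theorem tS_not_mem (n : ℕ) (hn : 1 ≤ n) : ∀ b, tS n hn b ∉ (φS n b).range := by
  intro b hmem
  obtain ⟨u, hu⟩ := hmem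
  obtain ⟨kz, rfl⟩ := unit_zpow u
  cases b with
  | true =>
      have hchi := congrArg (chi 1) hu
      rw [map_zpow, map_zpow, φS_true_of, chi_rel 1, one_zpow] at hchi
      have h2 : chi 1 (tS n hn true) = Multiplicative.ofAdd 1 := chi_of_inl 0
      rw [h2] at hchi
      simpa using congrArg Multiplicative.toAdd hchi
  | false =>
      have hchi := congrArg (chi n) hu
      rw [map_zpow, map_zpow, φS_false_of, map_inv, chi_rel n, inv_one, one_zpow] at hchi
      have h2 : chi n (tS n hn false) = Multiplicative.ofAdd 1 := chi_of_inl ⟨0, hn⟩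
      rw [h2] at hchi
      simpa using congrArg Multiplicative.toAdd hchi

/-! The isomorphism between the presented group and the amalgam -/

def ofA (k : ℕ) : FreeGroup (Fin 1 ⊕ Fin 1) →* PushoutI (φS (k + 1)) :=
  PushoutI.of (φ := φS (k + 1)) true

def ofB (k : ℕ) : FreeGroup (Fin (k + 1) ⊕ Fin (k + 1)) →* PushoutI (φS (k + 1)) :=
  PushoutI.of (φ := φS (k + 1)) false

def genMap (k : ℕ) : (Fin (k + 2) ⊕ Fin (k + 2)) → PushoutI (φS (k + 1)) := fun s =>
  match s with
  | .inl i => Fin.cases (ofA k (FreeGroup.of (Sum.inl (0 : Fin 1))))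
      (fun i' => ofB k (FreeGroup.of (Sum.inl i'))) i
  | .inr i => Fin.cases (ofA k (FreeGroup.of (Sum.inr (0 : Fin 1))))
      (fun i' => ofB k (FreeGroup.of (Sum.inr i'))) i

theorem lift_genMap (k : ℕ) : FreeGroup.lift (genMap k) (surfaceRelator (k + 2)) = 1 := by
  rw [hom_surfaceRelator, List.ofFn_succ, List.prod_cons]
  have hhead : ⁅FreeGroup.lift (genMap k) (FreeGroup.of (Sum.inl (0 : Fin (k + 2)))),
      FreeGroup.lift (genMap k) (FreeGroup.of (Sum.inr (0 : Fin (k + 2))))⁆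
      = ofA k (surfaceRelator 1) := by
    rw [FreeGroup.lift_apply_of, FreeGroup.lift_apply_of]
    show ⁅genMap k (Sum.inl 0), genMap k (Sum.inr 0)⁆ = _
    simp only [genMap, Fin.cases_zero]
    rw [← map_commutatorElement, surfaceRelator_one]
  have htail : (List.ofFn fun i : Fin (k + 1) =>
      ⁅FreeGroup.lift (genMap k) (FreeGroup.of (Sum.inl i.succ)),
        FreeGroup.lift (genMap k) (FreeGroup.of (Sum.inr i.succ))⁆).prod
      = ofB k (surfaceRelator (k + 1)) := by
    rw [hom_surfaceRelator (ofB k)]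
    have : (fun i : Fin (k + 1) =>
        ⁅FreeGroup.lift (genMap k) (FreeGroup.of (Sum.inl i.succ)),
          FreeGroup.lift (genMap k) (FreeGroup.of (Sum.inr i.succ))⁆)
        = fun i : Fin (k + 1) =>
        ⁅ofB k (FreeGroup.of (Sum.inl i)), ofB k (FreeGroup.of (Sum.inr i))⁆ := by
      funext i
      rw [FreeGroup.lift_apply_of, FreeGroup.lift_apply_of]
      show ⁅genMap k (Sum.inl i.succ), genMap k (Sum.inr i.succ)⁆ = _
      simp only [genMap, Fin.cases_succ]
    rw [this]
  rw [hhead, htail]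
  have h1 : ofA k (surfaceRelator 1) = base (φS (k + 1)) (FreeGroup.of ()) := by
    rw [← of_apply_eq_base (φS (k + 1)) true (FreeGroup.of ()), φS_true_of]
    rfl
  have h2 : ofB k (surfaceRelator (k + 1)) = (base (φS (k + 1)) (FreeGroup.of ()))⁻¹ := by
    rw [← of_apply_eq_base (φS (k + 1)) false (FreeGroup.of ()), φS_false_of, map_inv, inv_inv]
    rfl
  rw [h1, h2, mul_inv_cancel]

theorem genMap_rels (k : ℕ) :
    ∀ r ∈ ({surfaceRelator (k + 2)} : Set (FreeGroup (Fin (k + 2) ⊕ Fin (k + 2)))),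
      FreeGroup.lift (genMap k) r = 1 := by
  intro r hr
  rw [Set.mem_singleton_iff] at hr
  rw [hr]
  exact lift_genMap k

/-- The forward homomorphism. -/
def FF (k : ℕ) : PresentedGroup ({surfaceRelator (k + 2)} :
    Set (FreeGroup (Fin (k + 2) ⊕ Fin (k + 2)))) →* PushoutI (φS (k + 1)) :=
  PresentedGroup.toGroup (genMap_rels k)

/-- components of the reverse homomorphism -/
def fKt (k : ℕ) : FreeGroup (Fin 1 ⊕ Fin 1) →* PresentedGroup ({surfaceRelator (k + 2)} :
    Set (FreeGroup (Fin (k + 2) ⊕ Fin (k + 2)))) :=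
  FreeGroup.lift (Sum.elim
    (fun _ => (PresentedGroup.of (Sum.inl (0 : Fin (k + 2))) :
      PresentedGroup ({surfaceRelator (k + 2)} :
        Set (FreeGroup (Fin (k + 2) ⊕ Fin (k + 2))))))
    (fun _ => PresentedGroup.of (Sum.inr (0 : Fin (k + 2)))))

def fKf (k : ℕ) : FreeGroup (Fin (k + 1) ⊕ Fin (k + 1)) →* PresentedGroup ({surfaceRelator (k + 2)} :
    Set (FreeGroup (Fin (k + 2) ⊕ Fin (k + 2)))) :=
  FreeGroup.lift (Sum.elim
    (fun i : Fin (k + 1) => (PresentedGroup.of (Sum.inl i.succ) :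
      PresentedGroup ({surfaceRelator (k + 2)} :
        Set (FreeGroup (Fin (k + 2) ⊕ Fin (k + 2))))))
    (fun i => PresentedGroup.of (Sum.inr i.succ)))

def fK (k : ℕ) : ∀ b, GF (k + 1) b →* PresentedGroup ({surfaceRelator (k + 2)} :
    Set (FreeGroup (Fin (k + 2) ⊕ Fin (k + 2))))
  | true => fKt k
  | false => fKf k

theorem fKt_inl (k : ℕ) (i : Fin 1) :
    fKt k (FreeGroup.of (Sum.inl i)) = PresentedGroup.of (Sum.inl (0 : Fin (k + 2))) :=
  FreeGroup.lift_apply_of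

theorem fKt_inr (k : ℕ) (i : Fin 1) :
    fKt k (FreeGroup.of (Sum.inr i)) = PresentedGroup.of (Sum.inr (0 : Fin (k + 2))) :=
  FreeGroup.lift_apply_of

theorem fKf_inl (k : ℕ) (i : Fin (k + 1)) :
    fKf k (FreeGroup.of (Sum.inl i)) = PresentedGroup.of (Sum.inl i.succ) :=
  FreeGroup.lift_apply_of

theorem fKf_inr (k : ℕ) (i : Fin (k + 1)) :
    fKf k (FreeGroup.of (Sum.inr i)) = PresentedGroup.of (Sum.inr i.succ) :=
  FreeGroup.lift_apply_of

def kBase (k : ℕ) : FreeGroup Unit →* PresentedGroup ({surfaceRelator (k + 2)} :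
    Set (FreeGroup (Fin (k + 2) ⊕ Fin (k + 2)))) :=
  FreeGroup.lift fun _ =>
    ⁅(PresentedGroup.of (Sum.inl (0 : Fin (k + 2))) : PresentedGroup ({surfaceRelator (k + 2)} :
        Set (FreeGroup (Fin (k + 2) ⊕ Fin (k + 2))))),
      PresentedGroup.of (Sum.inr (0 : Fin (k + 2)))⁆

theorem kBase_of (k : ℕ) : kBase k (FreeGroup.of ())
    = ⁅(PresentedGroup.of (Sum.inl (0 : Fin (k + 2))) : PresentedGroup ({surfaceRelator (k + 2)} :
        Set (FreeGroup (Fin (k + 2) ⊕ Fin (k + 2))))),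
      PresentedGroup.of (Sum.inr (0 : Fin (k + 2)))⁆ :=
  FreeGroup.lift_apply_of

theorem mk_surfaceRelator (k : ℕ) :
    PresentedGroup.mk ({surfaceRelator (k + 2)} :
      Set (FreeGroup (Fin (k + 2) ⊕ Fin (k + 2)))) (surfaceRelator (k + 2)) = 1 :=
  (QuotientGroup.eq_one_iff _).2
    (Subgroup.subset_normalClosure (Set.mem_singleton _))

theorem fKf_rel (k : ℕ) : fKf k (surfaceRelator (k + 1))
    = (kBase k (FreeGroup.of ()))⁻¹ := by
  have hfk : fKf k (surfaceRelator (k + 1))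
      = (List.ofFn fun i : Fin (k + 1) =>
          ⁅(PresentedGroup.of (Sum.inl i.succ) : PresentedGroup ({surfaceRelator (k + 2)} :
              Set (FreeGroup (Fin (k + 2) ⊕ Fin (k + 2))))),
            PresentedGroup.of (Sum.inr i.succ)⁆).prod := by
    rw [hom_surfaceRelator (fKf k)]
    have heq : (fun i : Fin (k + 1) =>
        ⁅fKf k (FreeGroup.of (Sum.inl i)), fKf k (FreeGroup.of (Sum.inr i))⁆)
        = fun i : Fin (k + 1) =>
        ⁅(PresentedGroup.of (Sum.inl i.succ) : PresentedGroup ({surfaceRelator (k + 2)} :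
            Set (FreeGroup (Fin (k + 2) ⊕ Fin (k + 2))))),
          PresentedGroup.of (Sum.inr i.succ)⁆ := by
      funext i
      rw [fKf_inl, fKf_inr]
    rw [heq]
  rw [hfk, kBase_of]
  have hrel := mk_surfaceRelator k
  rw [hom_surfaceRelator (PresentedGroup.mk ({surfaceRelator (k + 2)} :
      Set (FreeGroup (Fin (k + 2) ⊕ Fin (k + 2))))), List.ofFn_succ, List.prod_cons] at hrel
  have hmk : ∀ x : Fin (k + 2) ⊕ Fin (k + 2),
      PresentedGroup.mk ({surfaceRelator (k + 2)} :
        Set (FreeGroup (Fin (k + 2) ⊕ Fin (k + 2)))) (FreeGroup.of x)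
      = PresentedGroup.of x := fun _ => rfl
  simp only [hmk] at hrel
  rw [eq_inv_of_mul_eq_one_right hrel]

theorem fK_comp (k : ℕ) : ∀ b, (fK k b).comp (φS (k + 1) b) = kBase k := by
  intro b
  cases b with
  | true =>
      apply FreeGroup.ext_hom
      intro a
      cases a
      show fKt k (φS (k + 1) true (FreeGroup.of ())) = kBase k (FreeGroup.of ())
      rw [φS_true_of, surfaceRelator_one, map_commutatorElement, fKt_inl, fKt_inr, kBase_of]
  | false =>
      apply FreeGroup.ext_hom
      intro a
      cases a
      show fKf k (φS (k + 1) false (FreeGroup.of ())) = kBase k (FreeGroup.of ())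
      rw [φS_false_of, map_inv, fKf_rel, inv_inv]

/-- The reverse homomorphism. -/
def KK (k : ℕ) : PushoutI (φS (k + 1)) →* PresentedGroup ({surfaceRelator (k + 2)} :
    Set (FreeGroup (Fin (k + 2) ⊕ Fin (k + 2)))) :=
  PushoutI.lift (fK k) (kBase k) (fK_comp k)

theorem FF_of (k : ℕ) (x : Fin (k + 2) ⊕ Fin (k + 2)) :
    FF k (PresentedGroup.of x) = genMap k x :=
  PresentedGroup.toGroup.of (genMap_rels k)

set_option maxHeartbeats 1000000 in
theorem KK_ofA (k : ℕ) (g : FreeGroup (Fin 1 ⊕ Fin 1)) : KK k (ofA k g) = fKt k g :=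
  PushoutI.lift_of (fK k) (kBase k) (fK_comp k) (i := true) g

set_option maxHeartbeats 1000000 in
theorem KK_ofB (k : ℕ) (g : FreeGroup (Fin (k + 1) ⊕ Fin (k + 1))) :
    KK k (ofB k g) = fKf k g :=
  PushoutI.lift_of (fK k) (kBase k) (fK_comp k) (i := false) g

theorem genMap_inl_zero (k : ℕ) :
    genMap k (Sum.inl (0 : Fin (k + 2))) = ofA k (FreeGroup.of (Sum.inl (0 : Fin 1))) := by
  simp [genMap]

theorem genMap_inr_zero (k : ℕ) :
    genMap k (Sum.inr (0 : Fin (k + 2))) = ofA k (FreeGroup.of (Sum.inr (0 : Fin 1))) := by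
  simp [genMap]

theorem genMap_inl_succ (k : ℕ) (i : Fin (k + 1)) :
    genMap k (Sum.inl i.succ) = ofB k (FreeGroup.of (Sum.inl i)) := by
  simp [genMap]

theorem genMap_inr_succ (k : ℕ) (i : Fin (k + 1)) :
    genMap k (Sum.inr i.succ) = ofB k (FreeGroup.of (Sum.inr i)) := by
  simp [genMap]

theorem KK_FF (k : ℕ) (x : PresentedGroup ({surfaceRelator (k + 2)} :
    Set (FreeGroup (Fin (k + 2) ⊕ Fin (k + 2))))) : KK k (FF k x) = x := by
  have hcomp : (KK k).comp (FF k) = MonoidHom.id _ := by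
    apply PresentedGroup.ext
    intro x
    show KK k (FF k (PresentedGroup.of x)) = PresentedGroup.of x
    rw [FF_of]
    rcases x with i | i
    · refine Fin.cases ?_ ?_ i
      · rw [genMap_inl_zero, KK_ofA, fKt_inl]
      · intro i'
        rw [genMap_inl_succ, KK_ofB, fKf_inl]
    · refine Fin.cases ?_ ?_ i
      · rw [genMap_inr_zero, KK_ofA, fKt_inr]
      · intro i'
        rw [genMap_inr_succ, KK_ofB, fKf_inr]
  have := DFunLike.congr_fun hcomp x
  simpa using this

theorem FF_KK (k : ℕ) (y : PushoutI (φS (k + 1))) : FF k (KK k y) = y := by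
  have hcomp : (FF k).comp (KK k) = MonoidHom.id _ := by
    apply hom_ext_nonempty
    intro b
    cases b with
    | true =>
        show ((FF k).comp (KK k)).comp (ofA k)
            = (MonoidHom.id (PushoutI (φS (k + 1)))).comp (ofA k)
        apply FreeGroup.ext_hom
        intro a
        rcases a with i | i
        · have hi : i = 0 := Subsingleton.elim i 0
          subst hi
          show FF k (KK k (ofA k (FreeGroup.of (Sum.inl 0)))) = ofA k (FreeGroup.of (Sum.inl 0))
          rw [KK_ofA, fKt_inl, FF_of, genMap_inl_zero]
        · have hi : i = 0 := Subsingleton.elim i 0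
          subst hi
          show FF k (KK k (ofA k (FreeGroup.of (Sum.inr 0)))) = ofA k (FreeGroup.of (Sum.inr 0))
          rw [KK_ofA, fKt_inr, FF_of, genMap_inr_zero]
    | false =>
        show ((FF k).comp (KK k)).comp (ofB k)
            = (MonoidHom.id (PushoutI (φS (k + 1)))).comp (ofB k)
        apply FreeGroup.ext_hom
        intro a
        rcases a with i | i
        · show FF k (KK k (ofB k (FreeGroup.of (Sum.inl i)))) = ofB k (FreeGroup.of (Sum.inl i))
          rw [KK_ofB, fKf_inl, FF_of, genMap_inl_succ]
        · show FF k (KK k (ofB k (FreeGroup.of (Sum.inr i)))) = ofB k (FreeGroup.of (Sum.inr i))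
          rw [KK_ofB, fKf_inr, FF_of, genMap_inr_succ]
  have := DFunLike.congr_fun hcomp y
  simpa using this

end SurfaceAux

/-- The fundamental group of a closed orientable surface of genus `g ≥ 2`
has trivial center. -/
theorem stmt18 (g : ℕ) (hg : 2 ≤ g) :
    Subgroup.center (PresentedGroup ({surfaceRelator g} :
      Set (FreeGroup (Fin g ⊕ Fin g)))) = ⊥ := by
  classical
  obtain ⟨k, rfl⟩ : ∃ k, g = k + 2 := ⟨g - 2, by omega⟩
  rw [eq_bot_iff]
  intro z hzc
  rw [Subgroup.mem_bot]
  have hzc' := Subgroup.mem_center_iff.1 hzc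
  open SurfaceAux in
  have hcent : ∀ y : PushoutI (SurfaceAux.φS (k + 1)),
      y * SurfaceAux.FF k z = SurfaceAux.FF k z * y := by
    intro y
    have h1 : SurfaceAux.FF k (SurfaceAux.KK k y) = y := SurfaceAux.FF_KK k y
    calc y * SurfaceAux.FF k z
        = SurfaceAux.FF k (SurfaceAux.KK k y) * SurfaceAux.FF k z := by rw [h1]
      _ = SurfaceAux.FF k (SurfaceAux.KK k y * z) := (map_mul _ _ _).symm
      _ = SurfaceAux.FF k (z * SurfaceAux.KK k y) := by rw [hzc' (SurfaceAux.KK k y)]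
      _ = SurfaceAux.FF k z * SurfaceAux.FF k (SurfaceAux.KK k y) := map_mul _ _ _
      _ = SurfaceAux.FF k z * y := by rw [h1]
  obtain ⟨h, hh⟩ := SurfaceAux.mem_base_range_of_center (SurfaceAux.φS_injective k)
    (SurfaceAux.tS (k + 1) (Nat.succ_le_succ (Nat.zero_le k)))
    (SurfaceAux.tS_not_mem (k + 1) (Nat.succ_le_succ (Nat.zero_le k))) hcent
  obtain ⟨kz, rfl⟩ := SurfaceAux.unit_zpow h
  have hb1 : (Monoid.PushoutI.base (SurfaceAux.φS (k + 1))) (FreeGroup.of ())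
      = SurfaceAux.ofA k (surfaceRelator 1) := by
    rw [← Monoid.PushoutI.of_apply_eq_base (SurfaceAux.φS (k + 1)) true (FreeGroup.of ()),
      SurfaceAux.φS_true_of]
    rfl
  have hbase : (Monoid.PushoutI.base (SurfaceAux.φS (k + 1))) (FreeGroup.of () ^ kz)
      = SurfaceAux.ofA k ((surfaceRelator 1) ^ kz) := by
    rw [map_zpow, map_zpow, hb1]
  have hcomm := hcent (SurfaceAux.ofA k (FreeGroup.of (Sum.inl (0 : Fin 1))))
  rw [hh, hbase, ← map_mul, ← map_mul] at hcomm
  have hinj : Function.Injective (SurfaceAux.ofA k) :=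
    Monoid.PushoutI.of_injective (SurfaceAux.φS_injective k) true
  have heq := hinj hcomm
  have hpsi := congrArg (SurfaceAux.psi 1) heq
  rw [map_mul, map_mul, map_zpow,
    (SurfaceAux.psi_rel 0 : SurfaceAux.psi 1 (surfaceRelator 1) = SurfaceAux.rz (-2)),
    (SurfaceAux.psi_of_inl0 (m := 0) :
      SurfaceAux.psi 1 (FreeGroup.of (Sum.inl (0 : Fin 1))) = SurfaceAux.srz 0)] at hpsi
  have hkz : kz = 0 := SurfaceAux.detect_comm hpsi
  subst hkz
  rw [zpow_zero, map_one] at hh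
  have h2 := SurfaceAux.KK_FF k z
  rw [hh, map_one] at h2
  exact h2.symm
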